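/- Let G be a finitely generated infinite group with finite symmetric generating set S, and suppose G has a central element of infinite order. For any 1 ≤ p < ∞, every harmonic function α ∈ D^p(G) is constant; that is, LHD^p(G) = ℂ. -/

import Mathlib

open scoped BigOperators

private lemma rpow_add_le_aux {p : ℝ} (hp : 0 ≤ p) (a b : ℂ) :
    ‖a + b‖ ^ p ≤ 2 ^ p * (‖a‖ ^ p + ‖b‖ ^ p) := by
  have h1 : ‖a + b‖ ≤ 2 * max ‖a‖ ‖b‖ := by
    have := norm_add_le a b
    have h2 : ‖a‖ ≤ max ‖a‖ ‖b‖ := le_max_left _ _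
    have h3 : ‖b‖ ≤ max ‖a‖ ‖b‖ := le_max_right _ _
    linarith
  calc ‖a + b‖ ^ p ≤ (2 * max ‖a‖ ‖b‖) ^ p :=
        Real.rpow_le_rpow (norm_nonneg _) h1 hp
    _ = 2 ^ p * (max ‖a‖ ‖b‖) ^ p :=
        Real.mul_rpow (by norm_num) (le_max_of_le_left (norm_nonneg a))
    _ ≤ 2 ^ p * (‖a‖ ^ p + ‖b‖ ^ p) := by
        apply mul_le_mul_of_nonneg_left _ (Real.rpow_nonneg (by norm_num) p)
        rcases max_cases ‖a‖ ‖b‖ with ⟨h, _⟩ | ⟨h, _⟩ <;> rw [h]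
        · linarith [Real.rpow_nonneg (norm_nonneg b) p]
        · linarith [Real.rpow_nonneg (norm_nonneg a) p]

/-- Maximum principle: a harmonic real function whose `p`-th power of absolute
value is summable over an infinite group is everywhere nonpositive. -/
private lemma harmonic_nonpos {G : Type*} [Group G] [Infinite G] (S : Finset G)
    (hsym : ∀ g ∈ S, g⁻¹ ∈ S) (hgen : Subgroup.closure (S : Set G) = ⊤)
    {p : ℝ} (hp : 0 < p) (u : G → ℝ)
    (hsum : Summable fun x => |u x| ^ p)
    (hharm : ∀ x : G, ∑ g ∈ S, (u (x * g⁻¹) - u x) = 0) :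
    ∀ x, u x ≤ 0 := by
  by_contra h
  push_neg at h
  obtain ⟨x₀, hx₀⟩ := h
  have hppos : (0:ℝ) < u x₀ ^ p := Real.rpow_pos_of_pos hx₀ p
  have hev : ∀ᶠ x in Filter.cofinite, |u x| ^ p < u x₀ ^ p :=
    hsum.tendsto_cofinite_zero.eventually_lt_const hppos
  have hfin : {x : G | ¬ |u x| ^ p < u x₀ ^ p}.Finite := Filter.eventually_cofinite.mp hev
  have hx₀mem : x₀ ∈ hfin.toFinset := by
    simp only [Set.Finite.mem_toFinset, Set.mem_setOf_eq, not_lt]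
    have : |u x₀| = u x₀ := abs_of_pos hx₀
    rw [this]
  obtain ⟨m, hmF, hmmax⟩ := Finset.exists_max_image hfin.toFinset u ⟨x₀, hx₀mem⟩
  -- m is a global maximum
  have hglob : ∀ x, u x ≤ u m := by
    intro x
    by_cases hxF : x ∈ hfin.toFinset
    · exact hmmax x hxF
    · simp only [Set.Finite.mem_toFinset, Set.mem_setOf_eq, not_not] at hxF
      have h1 : |u x| < u x₀ := by
        by_contra hcon
        push_neg at hcon
        exact absurd (Real.rpow_le_rpow hx₀.le hcon hp.le) (not_le.mpr hxF)
      have : u x ≤ |u x| := le_abs_self _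
      linarith [hmmax x₀ hx₀mem]
  -- harmonicity at max points: neighbors of a max point are max points
  have hstep : ∀ x, u x = u m → ∀ g ∈ S, u (x * g⁻¹) = u m := by
    intro x hx g hg
    have hle : ∀ h ∈ S, u (x * h⁻¹) - u x ≤ 0 := by
      intro h _
      have := hglob (x * h⁻¹)
      linarith [hx ▸ this]
    have := (Finset.sum_eq_zero_iff_of_nonpos hle).mp (hharm x) g hg
    linarith
  -- u is constant equal to u m
  have hconst : ∀ x, u x = u m := by
    intro x
    have key : ∀ w, w ∈ Subgroup.closure (S : Set G) → u (m * w) = u m := by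
      intro w hw
      induction hw using Subgroup.closure_induction_right with
      | one => simp
      | mul_right w hw g hg ih =>
          have := hstep (m * w) ih g⁻¹ (hsym g hg)
          rw [inv_inv] at this
          rw [← mul_assoc]
          exact this
      | mul_inv_cancel w hw g hg ih =>
          have := hstep (m * w) ih g hg
          rw [← mul_assoc]
          exact this
    have hx : m⁻¹ * x ∈ Subgroup.closure (S : Set G) := by rw [hgen]; trivial
    simpa using key _ hx
  -- constant positive function is not p-power-summable over infinite G
  have humpos : 0 < u m := lt_of_lt_of_le hx₀ (hmmax x₀ hx₀mem)
  have : Summable (fun _ : G => u m ^ p) := by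
    apply hsum.congr
    intro x
    rw [hconst x, abs_of_pos humpos]
  have := (summable_const_iff (u m ^ p)).mp this
  exact absurd this (ne_of_gt (Real.rpow_pos_of_pos humpos p))

/-- If `G` has a central element of infinite order, then every harmonic function
in `D^p(G)` (for `1 ≤ p < ∞`) is constant: `LHD^p(G) = ℂ`. -/
theorem LHDp_eq_const {G : Type*} [Group G] (S : Finset G)
    (hsym : ∀ g ∈ S, g⁻¹ ∈ S) (hgen : Subgroup.closure (S : Set G) = ⊤)
    (y : G) (hy : y ∈ Subgroup.center G) (hyord : ¬ IsOfFinOrder y)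
    (p : ℝ) (hp : 1 ≤ p) (α : G → ℂ)
    (hmem : ∀ g ∈ S, Summable (fun x : G => ‖α (x * g⁻¹) - α x‖ ^ p))
    (hharm : ∀ x : G, ∑ g ∈ S, (α (x * g⁻¹) - α x) = 0) :
    ∃ c : ℂ, ∀ x : G, α x = c := by
  have hp0 : (0:ℝ) < p := lt_of_lt_of_le one_pos hp
  have hG : Infinite G :=
    Infinite.of_injective _ (injective_pow_iff_not_isOfFinOrder.mpr hyord)
  -- step 1 : difference functions along any group element are p-summable
  have key : ∀ z : G, Summable (fun x : G => ‖α (x * z) - α x‖ ^ p) := by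
    intro z
    have hz : z ∈ Subgroup.closure (S : Set G) := by rw [hgen]; trivial
    induction hz using Subgroup.closure_induction_right with
    | one =>
        have : (fun x : G => ‖α (x * 1) - α x‖ ^ p) = fun _ => (0:ℝ) := by
          funext x
          simp [Real.zero_rpow (ne_of_gt hp0)]
        rw [this]
        exact summable_zero
    | mul_right w hw g hg ih =>
        have h1 : Summable (fun x : G => ‖α (x * g) - α x‖ ^ p) := by
          have := hmem g⁻¹ (hsym g hg)
          simpa using this
        have h2 : Summable (fun x : G => ‖α (x * w * g) - α (x * w)‖ ^ p) := by
          have := h1.comp_injective (Equiv.mulRight w).injective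
          exact this.congr fun x => rfl
        apply Summable.of_nonneg_of_le
          (fun x => Real.rpow_nonneg (norm_nonneg _) p)
          (fun x => ?_) ((h2.add ih).mul_left (2 ^ p))
        have he : α (x * (w * g)) - α x =
            (α (x * w * g) - α (x * w)) + (α (x * w) - α x) := by
          rw [← mul_assoc]; ring
        rw [he]
        exact rpow_add_le_aux hp0.le _ _
    | mul_inv_cancel w hw g hg ih =>
        have h1 : Summable (fun x : G => ‖α (x * g⁻¹) - α x‖ ^ p) := hmem g hg
        have h2 : Summable (fun x : G => ‖α (x * w * g⁻¹) - α (x * w)‖ ^ p) := by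
          have := h1.comp_injective (Equiv.mulRight w).injective
          exact this.congr fun x => rfl
        apply Summable.of_nonneg_of_le
          (fun x => Real.rpow_nonneg (norm_nonneg _) p)
          (fun x => ?_) ((h2.add ih).mul_left (2 ^ p))
        have he : α (x * (w * g⁻¹)) - α x =
            (α (x * w * g⁻¹) - α (x * w)) + (α (x * w) - α x) := by
          rw [← mul_assoc]; ring
        rw [he]
        exact rpow_add_le_aux hp0.le _ _
  -- the shifted difference β
  set β : G → ℂ := fun x => α (x * y) - α x with hβ
  have hβsum : Summable (fun x => ‖β x‖ ^ p) := key y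
  have hcen : ∀ z : G, z * y = y * z := fun z => Subgroup.mem_center_iff.mp hy z
  have hβharm : ∀ x : G, ∑ g ∈ S, (β (x * g⁻¹) - β x) = 0 := by
    intro x
    have he : ∀ g : G, β (x * g⁻¹) - β x =
        (α (x * y * g⁻¹) - α (x * y)) - (α (x * g⁻¹) - α x) := by
      intro g
      have hc : x * g⁻¹ * y = x * y * g⁻¹ := by
        rw [mul_assoc, hcen g⁻¹, ← mul_assoc]
      simp only [hβ, hc]
      ring
    calc ∑ g ∈ S, (β (x * g⁻¹) - β x)
        = ∑ g ∈ S, ((α (x * y * g⁻¹) - α (x * y)) - (α (x * g⁻¹) - α x)) :=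
          Finset.sum_congr rfl fun g _ => he g
      _ = (∑ g ∈ S, (α (x * y * g⁻¹) - α (x * y))) - ∑ g ∈ S, (α (x * g⁻¹) - α x) :=
          Finset.sum_sub_distrib _ _
      _ = 0 := by rw [hharm (x * y), hharm x, sub_zero]
  -- real and imaginary parts of β vanish by the maximum principle
  have hvanish : ∀ (u : G → ℝ), (∀ x, |u x| ≤ ‖β x‖) →
      (∀ x : G, ∑ g ∈ S, (u (x * g⁻¹) - u x) = 0) → ∀ x, u x = 0 := by
    intro u hub huh x
    have husum : Summable (fun x => |u x| ^ p) :=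
      Summable.of_nonneg_of_le (fun x => Real.rpow_nonneg (abs_nonneg _) p)
        (fun x => Real.rpow_le_rpow (abs_nonneg _) (hub x) hp0.le) hβsum
    have h1 := harmonic_nonpos S hsym hgen hp0 u husum huh x
    have h2 := harmonic_nonpos S hsym hgen hp0 (fun z => -u z)
      (husum.congr fun z => by rw [abs_neg])
      (fun z => by
        have := huh z
        have : ∑ g ∈ S, (-u (z * g⁻¹) - -u z) = -∑ g ∈ S, (u (z * g⁻¹) - u z) := by
          rw [← Finset.sum_neg_distrib]
          exact Finset.sum_congr rfl fun g _ => by ring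
        rw [this, huh z, neg_zero]) x
    simp only [neg_nonpos] at h2
    linarith
  have hβ0 : ∀ x, β x = 0 := by
    intro x
    have hre : (β x).re = 0 := by
      apply hvanish (fun z => (β z).re) (fun z => Complex.abs_re_le_norm (β z))
      intro z
      have : ∑ g ∈ S, ((β (z * g⁻¹)).re - (β z).re) =
          (∑ g ∈ S, (β (z * g⁻¹) - β z)).re := by
        rw [Complex.re_sum]
        exact Finset.sum_congr rfl fun g _ => (Complex.sub_re _ _).symm
      rw [this, hβharm z, Complex.zero_re]
    have him : (β x).im = 0 := by
      apply hvanish (fun z => (β z).im) (fun z => Complex.abs_im_le_norm (β z))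
      intro z
      have : ∑ g ∈ S, ((β (z * g⁻¹)).im - (β z).im) =
          (∑ g ∈ S, (β (z * g⁻¹) - β z)).im := by
        rw [Complex.im_sum]
        exact Finset.sum_congr rfl fun g _ => (Complex.sub_im _ _).symm
      rw [this, hβharm z, Complex.zero_im]
    exact Complex.ext hre him
  have hαy : ∀ x, α (x * y) = α x := fun x => sub_eq_zero.mp (hβ0 x)
  have hαyn : ∀ (x : G) (n : ℕ), α (x * y ^ n) = α x := by
    intro x n
    induction n with
    | zero => simp
    | succ n ih =>
        rw [pow_succ, ← mul_assoc, hαy, ih]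
  -- step 2 : difference functions along generators vanish
  have hδ : ∀ g ∈ S, ∀ x, α (x * g⁻¹) = α x := by
    intro g hg x
    by_contra hne
    have hpos : (0:ℝ) < ‖α (x * g⁻¹) - α x‖ :=
      norm_pos_iff.mpr (sub_ne_zero.mpr fun h => hne h)
    have hinj : Function.Injective (fun n : ℕ => x * y ^ n) := by
      intro a b hab
      have : y ^ a = y ^ b := mul_left_cancel hab
      exact injective_pow_iff_not_isOfFinOrder.mpr hyord this
    have hcomp := (hmem g hg).comp_injective hinj
    have hconstval : ∀ n : ℕ,
        ‖α (x * y ^ n * g⁻¹) - α (x * y ^ n)‖ ^ p = ‖α (x * g⁻¹) - α x‖ ^ p := by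
      intro n
      have hyc : g⁻¹ * y ^ n = y ^ n * g⁻¹ := by
        have : y ^ n ∈ Subgroup.center G := pow_mem hy n
        exact Subgroup.mem_center_iff.mp this g⁻¹
      have h1 : x * y ^ n * g⁻¹ = x * g⁻¹ * y ^ n := by
        rw [mul_assoc, ← hyc, ← mul_assoc]
      rw [h1, hαyn (x * g⁻¹) n, hαyn x n]
    have : Summable (fun _ : ℕ => ‖α (x * g⁻¹) - α x‖ ^ p) :=
      hcomp.congr fun n => hconstval n
    have := (summable_const_iff _).mp this
    exact absurd this (ne_of_gt (Real.rpow_pos_of_pos hpos p))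
  -- conclude α is constant
  refine ⟨α 1, fun x => ?_⟩
  have hx : x ∈ Subgroup.closure (S : Set G) := by rw [hgen]; trivial
  induction hx using Subgroup.closure_induction_right with
  | one => rfl
  | mul_right w hw g hg ih =>
      have := hδ g⁻¹ (hsym g hg) w
      rw [inv_inv] at this
      rw [this, ih]
  | mul_inv_cancel w hw g hg ih =>
      rw [hδ g hg w, ih]
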